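/- Let R > 0 and let x ∈ ℝ² with ‖x‖ < 1. Define the spherical (conformal) Hessian of ρ_R at x as the bilinear form S(x)(y,z) := D²ρ_R(x)(y,z) − ⟪∇φ_R(x),y⟫·⟪∇ρ_R(x),z⟫ − ⟪∇φ_R(x),z⟫·⟪∇ρ_R(x),y⟫ + ⟪∇φ_R(x),∇ρ_R(x)⟫·⟪y,z⟫. Then: (i) for every y ∈ ℝ² with ⟪x,y⟫ = 0 one has S(x)(y,y) = μ₁(x)·‖y‖² where μ₁(x) = 4(1+R²)(R²−‖x‖²)/(R⁴(1−‖x‖²)³); and (ii) S(x)(x,x) = μ₂(x)·‖x‖² where μ₂(x) = 4(1+R²)(‖x‖²(5+‖x‖²) + R²(1+5‖x‖²))/(R⁴(1−‖x‖²)⁴). -/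

import Mathlib

open scoped RealInnerProductSpace

/-- The weight from the Poincaré disk model rewritten over the stereographic chart
of the sphere of radius `R`. -/
noncomputable def rhoR (R : ℝ) (x : EuclideanSpace ℝ (Fin 2)) : ℝ :=
  (R ^ 2 + ‖x‖ ^ 2) ^ 2 / (R ^ 4 * (1 - ‖x‖ ^ 2) ^ 2)

/-- The conformal factor of the spherical metric of radius `R` in stereographic
coordinates. -/
noncomputable def phiR (R : ℝ) (x : EuclideanSpace ℝ (Fin 2)) : ℝ :=
  Real.log (2 * R ^ 2 / (R ^ 2 + ‖x‖ ^ 2))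

/-- The Hessian of `rhoR` with respect to the conformal (spherical) metric,
computed via `Hess_g̃ F = Hess_g F − 2 dφ ⊗ dF + (∇φ·∇F) g`. -/
noncomputable def sphericalHess (R : ℝ) (x y z : EuclideanSpace ℝ (Fin 2)) : ℝ :=
  fderiv ℝ (fderiv ℝ (rhoR R)) x y z -
    ⟪gradient (phiR R) x, y⟫ * ⟪gradient (rhoR R) x, z⟫ -
    ⟪gradient (phiR R) x, z⟫ * ⟪gradient (rhoR R) x, y⟫ +
    ⟪gradient (phiR R) x, gradient (rhoR R) x⟫ * ⟪y, z⟫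

local notation "E" => EuclideanSpace ℝ (Fin 2)

private lemma aux_comp {f : ℝ → ℝ} {d : ℝ} (x : E) (hf : HasDerivAt f d (‖x‖ ^ 2)) :
    HasFDerivAt (fun y : E => f (‖y‖ ^ 2)) ((2 * d) • innerSL ℝ x) x := by
  have h := hf.comp_hasFDerivAt x ((hasStrictFDerivAt_norm_sq x).hasFDerivAt)
  refine h.congr_fderiv ?_
  ext y
  simp [smul_smul]
  ring

private lemma hasDerivAt_rho_scalar (R s : ℝ) (hR : R ≠ 0) (hs : (1:ℝ) - s ≠ 0) :
    HasDerivAt (fun s : ℝ => (R ^ 2 + s) ^ 2 / (R ^ 4 * (1 - s) ^ 2))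
      (2 * (1 + R ^ 2) * (R ^ 2 + s) / (R ^ 4 * (1 - s) ^ 3)) s := by
  have h1 : HasDerivAt (fun s : ℝ => (R ^ 2 + s) ^ 2) (2 * (R ^ 2 + s)) s := by
    refine (((hasDerivAt_id s).const_add (R ^ 2)).pow 2).congr_deriv ?_
    simp
  have h2 : HasDerivAt (fun s : ℝ => R ^ 4 * (1 - s) ^ 2) (R ^ 4 * (2 * (1 - s) * (-1))) s := by
    have := (((hasDerivAt_id s).const_sub 1).pow 2).const_mul (R ^ 4)
    simpa using this
  have hd : R ^ 4 * (1 - s) ^ 2 ≠ 0 := by positivity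
  have := h1.div h2 hd
  refine this.congr_deriv ?_
  field_simp
  ring

private lemma hasDerivAt_c_scalar (R s : ℝ) (hR : R ≠ 0) (hs : (1:ℝ) - s ≠ 0) :
    HasDerivAt (fun s : ℝ => 4 * (1 + R ^ 2) * (R ^ 2 + s) / (R ^ 4 * (1 - s) ^ 3))
      (4 * (1 + R ^ 2) * (1 + 3 * R ^ 2 + 2 * s) / (R ^ 4 * (1 - s) ^ 4)) s := by
  have h1 : HasDerivAt (fun s : ℝ => 4 * (1 + R ^ 2) * (R ^ 2 + s)) (4 * (1 + R ^ 2)) s := by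
    simpa using ((hasDerivAt_id s).const_add (R ^ 2)).const_mul (4 * (1 + R ^ 2))
  have h2 : HasDerivAt (fun s : ℝ => R ^ 4 * (1 - s) ^ 3)
      (R ^ 4 * (3 * (1 - s) ^ 2 * (-1))) s := by
    have := (((hasDerivAt_id s).const_sub 1).pow 3).const_mul (R ^ 4)
    simpa using this
  have hd : R ^ 4 * (1 - s) ^ 3 ≠ 0 := by
    have : (1 - s) ^ 3 ≠ 0 := pow_ne_zero _ hs
    positivity
  have := h1.div h2 hd
  refine this.congr_deriv ?_
  field_simp
  ring

private lemma hasDerivAt_phi_scalar (R s : ℝ) (hR : R ≠ 0) (hs : 0 ≤ s) :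
    HasDerivAt (fun s : ℝ => Real.log (2 * R ^ 2 / (R ^ 2 + s))) (-1 / (R ^ 2 + s)) s := by
  have hRs : R ^ 2 + s ≠ 0 := by positivity
  have h1 : HasDerivAt (fun s : ℝ => 2 * R ^ 2 / (R ^ 2 + s))
      ((0 * (R ^ 2 + s) - 2 * R ^ 2 * 1) / (R ^ 2 + s) ^ 2) s :=
    (hasDerivAt_const s (2 * R ^ 2)).div ((hasDerivAt_id s).const_add (R ^ 2)) hRs
  have hne : 2 * R ^ 2 / (R ^ 2 + s) ≠ 0 := by
    apply div_ne_zero _ hRs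
    positivity
  have := h1.log hne
  convert this using 1
  field_simp
  ring

private lemma gradient_of_smul_inner {F : E → ℝ} {c : ℝ} {x : E}
    (h : HasFDerivAt F (c • innerSL ℝ x) x) : gradient F x = c • x := by
  have hg : HasGradientAt F (c • x) x := by
    rw [hasGradientAt_iff_hasFDerivAt]
    have he : (InnerProductSpace.toDual ℝ E) (c • x) = c • innerSL ℝ x := by
      ext y
      simp [real_inner_smul_left]
    rw [he]
    exact h
  exact hg.gradient

private lemma one_sub_normsq_ne {x : E} (hx : ‖x‖ < 1) : (1:ℝ) - ‖x‖ ^ 2 ≠ 0 := by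
  have : ‖x‖ ^ 2 < 1 := by
    have := norm_nonneg x
    nlinarith
  linarith

private lemma hasFDerivAt_rhoR (R : ℝ) (hR : R ≠ 0) (x : E) (hx : ‖x‖ < 1) :
    HasFDerivAt (rhoR R)
      ((4 * (1 + R ^ 2) * (R ^ 2 + ‖x‖ ^ 2) / (R ^ 4 * (1 - ‖x‖ ^ 2) ^ 3)) • innerSL ℝ x) x := by
  have h := aux_comp x (hasDerivAt_rho_scalar R (‖x‖ ^ 2) hR (one_sub_normsq_ne hx))
  have he : 2 * (2 * (1 + R ^ 2) * (R ^ 2 + ‖x‖ ^ 2) / (R ^ 4 * (1 - ‖x‖ ^ 2) ^ 3))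
      = 4 * (1 + R ^ 2) * (R ^ 2 + ‖x‖ ^ 2) / (R ^ 4 * (1 - ‖x‖ ^ 2) ^ 3) := by ring
  rw [he] at h
  exact h

private lemma hasFDerivAt_phiR (R : ℝ) (hR : R ≠ 0) (x : E) :
    HasFDerivAt (phiR R) ((-2 / (R ^ 2 + ‖x‖ ^ 2)) • innerSL ℝ x) x := by
  have h := aux_comp x (hasDerivAt_phi_scalar R (‖x‖ ^ 2) hR (by positivity))
  have he : 2 * (-1 / (R ^ 2 + ‖x‖ ^ 2)) = -2 / (R ^ 2 + ‖x‖ ^ 2) := by ring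
  rw [he] at h
  exact h

private lemma second_fderiv_rhoR (R : ℝ) (hR : R ≠ 0) (x : E) (hx : ‖x‖ < 1) (y z : E) :
    fderiv ℝ (fderiv ℝ (rhoR R)) x y z =
      2 * (4 * (1 + R ^ 2) * (1 + 3 * R ^ 2 + 2 * ‖x‖ ^ 2) / (R ^ 4 * (1 - ‖x‖ ^ 2) ^ 4)) *
          ⟪x, y⟫ * ⟪x, z⟫ +
        4 * (1 + R ^ 2) * (R ^ 2 + ‖x‖ ^ 2) / (R ^ 4 * (1 - ‖x‖ ^ 2) ^ 3) * ⟪y, z⟫ := by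
  set c : E → ℝ := fun x' => 4 * (1 + R ^ 2) * (R ^ 2 + ‖x'‖ ^ 2) / (R ^ 4 * (1 - ‖x'‖ ^ 2) ^ 3)
    with hc_def
  have hev : (fun x' => fderiv ℝ (rhoR R) x') =ᶠ[nhds x] fun x' => c x' • innerSL ℝ x' := by
    have hU : IsOpen {x' : E | ‖x'‖ < 1} := isOpen_lt continuous_norm continuous_const
    filter_upwards [hU.mem_nhds hx] with x' hx'
    exact (hasFDerivAt_rhoR R hR x' hx').fderiv
  have hc : HasFDerivAt c
      ((2 * (4 * (1 + R ^ 2) * (1 + 3 * R ^ 2 + 2 * ‖x‖ ^ 2) / (R ^ 4 * (1 - ‖x‖ ^ 2) ^ 4))) •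
        innerSL ℝ x) x :=
    aux_comp x (hasDerivAt_c_scalar R (‖x‖ ^ 2) hR (one_sub_normsq_ne hx))
  have hf : HasFDerivAt (fun x' : E => innerSL ℝ x') (innerSL ℝ) x :=
    (innerSL ℝ : E →L[ℝ] _).hasFDerivAt
  have hG : HasFDerivAt (fun x' => c x' • innerSL ℝ x') _ x := hc.smul hf
  have h2 : fderiv ℝ (fderiv ℝ (rhoR R)) x = fderiv ℝ (fun x' => c x' • innerSL ℝ x') x :=
    hev.fderiv_eq
  rw [h2, hG.fderiv]
  have hyz : (innerSL ℝ y) z = ⟪y, z⟫ := rfl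
  simp [ContinuousLinearMap.smul_apply, ContinuousLinearMap.smulRight_apply, innerSL_apply_apply,
    hc_def, hyz]
  ring

theorem spherical_hessian_eigenvalues (R : ℝ) (hR : 0 < R)
    (x : EuclideanSpace ℝ (Fin 2)) (hx : ‖x‖ < 1) :
    (∀ y : EuclideanSpace ℝ (Fin 2), ⟪x, y⟫ = 0 →
        sphericalHess R x y y =
          (4 * (1 + R ^ 2) * (R ^ 2 - ‖x‖ ^ 2) / (R ^ 4 * (1 - ‖x‖ ^ 2) ^ 3)) * ‖y‖ ^ 2) ∧
      sphericalHess R x x x =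
        (4 * (1 + R ^ 2) * (‖x‖ ^ 2 * (5 + ‖x‖ ^ 2) + R ^ 2 * (1 + 5 * ‖x‖ ^ 2)) /
            (R ^ 4 * (1 - ‖x‖ ^ 2) ^ 4)) * ‖x‖ ^ 2 := by
  have hR0 : R ≠ 0 := ne_of_gt hR
  have hs1 : (1:ℝ) - ‖x‖ ^ 2 ≠ 0 := one_sub_normsq_ne hx
  have hRs : R ^ 2 + ‖x‖ ^ 2 ≠ 0 := by positivity
  have hgr : gradient (rhoR R) x
      = (4 * (1 + R ^ 2) * (R ^ 2 + ‖x‖ ^ 2) / (R ^ 4 * (1 - ‖x‖ ^ 2) ^ 3)) • x :=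
    gradient_of_smul_inner (hasFDerivAt_rhoR R hR0 x hx)
  have hgp : gradient (phiR R) x = (-2 / (R ^ 2 + ‖x‖ ^ 2)) • x :=
    gradient_of_smul_inner (hasFDerivAt_phiR R hR0 x)
  constructor
  · intro y hxy
    have hyx : ⟪y, x⟫ = 0 := by rw [real_inner_comm]; exact hxy
    unfold sphericalHess
    rw [second_fderiv_rhoR R hR0 x hx y y, hgr, hgp]
    simp only [real_inner_smul_left, real_inner_smul_right, hxy, hyx,
      real_inner_self_eq_norm_sq]
    field_simp
    ring
  · unfold sphericalHess
    rw [second_fderiv_rhoR R hR0 x hx x x, hgr, hgp]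
    simp only [real_inner_smul_left, real_inner_smul_right, real_inner_self_eq_norm_sq]
    field_simp
    ring
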